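/- Let 0 ≤ β < 1 and set a₀ = √(2(1−β²)). The Hessian matrix of V_β at the lamellar point (a₀, 0, 0) has eigenvalues 12(1−β²), 6(1−β²) + 12β√(1−β²), and 6(1−β²) − 12β√(1−β²). In particular, this Hessian is positive definite if and only if 0 ≤ β < 1/√5. -/

import Mathlib

/-- The Lyapunov function `V_β` of the amplitude ODE system. -/
noncomputable def V (β a b c : ℝ) : ℝ :=
  -3 * (1 - β ^ 2) * (a ^ 2 + b ^ 2 + c ^ 2) + 6 * Real.sqrt 2 * β * (a * b * c)
    + 3 * (a ^ 2 * b ^ 2 + b ^ 2 * c ^ 2 + a ^ 2 * c ^ 2)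
    + 3 / 4 * (a ^ 4 + b ^ 4 + c ^ 4)

/-- Partial derivative of a function of three real variables in the first variable. -/
noncomputable def pA (f : ℝ → ℝ → ℝ → ℝ) (a b c : ℝ) : ℝ := deriv (fun t => f t b c) a

/-- Partial derivative in the second variable. -/
noncomputable def pB (f : ℝ → ℝ → ℝ → ℝ) (a b c : ℝ) : ℝ := deriv (fun t => f a t c) b

/-- Partial derivative in the third variable. -/
noncomputable def pC (f : ℝ → ℝ → ℝ → ℝ) (a b c : ℝ) : ℝ := deriv (fun t => f a b t) c

/-- The Hessian matrix of `V_β` (matrix of second partial derivatives). -/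
noncomputable def hessV (β a b c : ℝ) : Matrix (Fin 3) (Fin 3) ℝ :=
  !![pA (pA (V β)) a b c, pA (pB (V β)) a b c, pA (pC (V β)) a b c;
     pB (pA (V β)) a b c, pB (pB (V β)) a b c, pB (pC (V β)) a b c;
     pC (pA (V β)) a b c, pC (pB (V β)) a b c, pC (pC (V β)) a b c]

/-- `μ` is an eigenvalue of the real matrix `M`. -/
def Matrix.HasEigenvalueR {n : ℕ} (M : Matrix (Fin n) (Fin n) ℝ) (μ : ℝ) : Prop :=
  ∃ v : Fin n → ℝ, v ≠ 0 ∧ M.mulVec v = μ • v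

lemma deriv_poly4 (c4 c3 c2 c1 c0 x : ℝ) :
    deriv (fun t : ℝ => c4*t^4 + c3*t^3 + c2*t^2 + c1*t + c0) x
      = 4*c4*x^3 + 3*c3*x^2 + 2*c2*x + c1 := by
  have h := (((((hasDerivAt_pow 4 x).const_mul c4).add
      ((hasDerivAt_pow 3 x).const_mul c3)).add
      ((hasDerivAt_pow 2 x).const_mul c2)).add
      ((hasDerivAt_id' x).const_mul c1)).add (hasDerivAt_const x c0)
  rw [show (fun t : ℝ => c4*t^4 + c3*t^3 + c2*t^2 + c1*t + c0) = (((((fun y : ℝ => c4 * y ^ 4) + fun y => c3 * y ^ 3) + fun y => c2 * y ^ 2) + fun y => c1 * y) + fun _ => c0) from rfl, h.deriv]; push_cast; ring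

lemma pA_V (β a b c : ℝ) : pA (V β) a b c
    = -6*(1-β^2)*a + 6*Real.sqrt 2*β*(b*c) + 6*a*b^2 + 6*a*c^2 + 3*a^3 := by
  unfold pA
  have h : (fun t : ℝ => V β t b c) = fun t : ℝ => (3/4)*t^4 + 0*t^3
      + (-3*(1-β^2)+3*b^2+3*c^2)*t^2 + (6*Real.sqrt 2*β*(b*c))*t
      + (-3*(1-β^2)*(b^2+c^2)+3*(b^2*c^2)+3/4*(b^4+c^4)) := by
    funext t; unfold V; ring
  rw [h, deriv_poly4]; ring

lemma pB_V (β a b c : ℝ) : pB (V β) a b c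
    = -6*(1-β^2)*b + 6*Real.sqrt 2*β*(a*c) + 6*b*a^2 + 6*b*c^2 + 3*b^3 := by
  unfold pB
  have h : (fun t : ℝ => V β a t c) = fun t : ℝ => (3/4)*t^4 + 0*t^3
      + (-3*(1-β^2)+3*a^2+3*c^2)*t^2 + (6*Real.sqrt 2*β*(a*c))*t
      + (-3*(1-β^2)*(a^2+c^2)+3*(a^2*c^2)+3/4*(a^4+c^4)) := by
    funext t; unfold V; ring
  rw [h, deriv_poly4]; ring

lemma pC_V (β a b c : ℝ) : pC (V β) a b c
    = -6*(1-β^2)*c + 6*Real.sqrt 2*β*(a*b) + 6*c*a^2 + 6*c*b^2 + 3*c^3 := by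
  unfold pC
  have h : (fun t : ℝ => V β a b t) = fun t : ℝ => (3/4)*t^4 + 0*t^3
      + (-3*(1-β^2)+3*a^2+3*b^2)*t^2 + (6*Real.sqrt 2*β*(a*b))*t
      + (-3*(1-β^2)*(a^2+b^2)+3*(a^2*b^2)+3/4*(a^4+b^4)) := by
    funext t; unfold V; ring
  rw [h, deriv_poly4]; ring

lemma hessV_eq (β a b c : ℝ) :
    hessV β a b c = !![-6*(1-β^2)+6*b^2+6*c^2+9*a^2, 12*a*b+6*Real.sqrt 2*β*c, 12*a*c+6*Real.sqrt 2*β*b;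
                       12*a*b+6*Real.sqrt 2*β*c, -6*(1-β^2)+6*a^2+6*c^2+9*b^2, 12*b*c+6*Real.sqrt 2*β*a;
                       12*a*c+6*Real.sqrt 2*β*b, 12*b*c+6*Real.sqrt 2*β*a, -6*(1-β^2)+6*a^2+6*b^2+9*c^2] := by
  have e11 : pA (pA (V β)) a b c = -6*(1-β^2)+6*b^2+6*c^2+9*a^2 := by
    show deriv (fun t : ℝ => pA (V β) t b c) a = _
    have h : (fun t : ℝ => pA (V β) t b c) = fun t : ℝ => 0*t^4 + 3*t^3
        + 0*t^2 + (-6*(1-β^2)+6*b^2+6*c^2)*t + (6*Real.sqrt 2*β*(b*c)) := by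
      funext t; rw [pA_V]; ring
    rw [h, deriv_poly4]; ring
  have e12 : pA (pB (V β)) a b c = 12*a*b+6*Real.sqrt 2*β*c := by
    show deriv (fun t : ℝ => pB (V β) t b c) a = _
    have h : (fun t : ℝ => pB (V β) t b c) = fun t : ℝ => 0*t^4 + 0*t^3
        + (6*b)*t^2 + (6*Real.sqrt 2*β*c)*t + (-6*(1-β^2)*b + 6*b*c^2 + 3*b^3) := by
      funext t; rw [pB_V]; ring
    rw [h, deriv_poly4]; ring
  have e13 : pA (pC (V β)) a b c = 12*a*c+6*Real.sqrt 2*β*b := by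
    show deriv (fun t : ℝ => pC (V β) t b c) a = _
    have h : (fun t : ℝ => pC (V β) t b c) = fun t : ℝ => 0*t^4 + 0*t^3
        + (6*c)*t^2 + (6*Real.sqrt 2*β*b)*t + (-6*(1-β^2)*c + 6*c*b^2 + 3*c^3) := by
      funext t; rw [pC_V]; ring
    rw [h, deriv_poly4]; ring
  have e21 : pB (pA (V β)) a b c = 12*a*b+6*Real.sqrt 2*β*c := by
    show deriv (fun t : ℝ => pA (V β) a t c) b = _
    have h : (fun t : ℝ => pA (V β) a t c) = fun t : ℝ => 0*t^4 + 0*t^3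
        + (6*a)*t^2 + (6*Real.sqrt 2*β*c)*t + (-6*(1-β^2)*a + 6*a*c^2 + 3*a^3) := by
      funext t; rw [pA_V]; ring
    rw [h, deriv_poly4]; ring
  have e22 : pB (pB (V β)) a b c = -6*(1-β^2)+6*a^2+6*c^2+9*b^2 := by
    show deriv (fun t : ℝ => pB (V β) a t c) b = _
    have h : (fun t : ℝ => pB (V β) a t c) = fun t : ℝ => 0*t^4 + 3*t^3
        + 0*t^2 + (-6*(1-β^2)+6*a^2+6*c^2)*t + (6*Real.sqrt 2*β*(a*c)) := by
      funext t; rw [pB_V]; ring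
    rw [h, deriv_poly4]; ring
  have e23 : pB (pC (V β)) a b c = 12*b*c+6*Real.sqrt 2*β*a := by
    show deriv (fun t : ℝ => pC (V β) a t c) b = _
    have h : (fun t : ℝ => pC (V β) a t c) = fun t : ℝ => 0*t^4 + 0*t^3
        + (6*c)*t^2 + (6*Real.sqrt 2*β*a)*t + (-6*(1-β^2)*c + 6*c*a^2 + 3*c^3) := by
      funext t; rw [pC_V]; ring
    rw [h, deriv_poly4]; ring
  have e31 : pC (pA (V β)) a b c = 12*a*c+6*Real.sqrt 2*β*b := by
    show deriv (fun t : ℝ => pA (V β) a b t) c = _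
    have h : (fun t : ℝ => pA (V β) a b t) = fun t : ℝ => 0*t^4 + 0*t^3
        + (6*a)*t^2 + (6*Real.sqrt 2*β*b)*t + (-6*(1-β^2)*a + 6*a*b^2 + 3*a^3) := by
      funext t; rw [pA_V]; ring
    rw [h, deriv_poly4]; ring
  have e32 : pC (pB (V β)) a b c = 12*b*c+6*Real.sqrt 2*β*a := by
    show deriv (fun t : ℝ => pB (V β) a b t) c = _
    have h : (fun t : ℝ => pB (V β) a b t) = fun t : ℝ => 0*t^4 + 0*t^3
        + (6*b)*t^2 + (6*Real.sqrt 2*β*a)*t + (-6*(1-β^2)*b + 6*b*a^2 + 3*b^3) := by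
      funext t; rw [pB_V]; ring
    rw [h, deriv_poly4]; ring
  have e33 : pC (pC (V β)) a b c = -6*(1-β^2)+6*a^2+6*b^2+9*c^2 := by
    show deriv (fun t : ℝ => pC (V β) a b t) c = _
    have h : (fun t : ℝ => pC (V β) a b t) = fun t : ℝ => 0*t^4 + 3*t^3
        + 0*t^2 + (-6*(1-β^2)+6*a^2+6*b^2)*t + (6*Real.sqrt 2*β*(a*b)) := by
      funext t; rw [pC_V]; ring
    rw [h, deriv_poly4]; ring
  unfold hessV
  rw [e11, e12, e13, e21, e22, e23, e31, e32, e33]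

set_option maxHeartbeats 1600000 in
/-- For `0 ≤ β < 1` and `a₀ = √(2(1 - β²))`, the Hessian of `V_β` at the
lamellar point `(a₀,0,0)` has eigenvalues `12(1-β²)`, `6(1-β²) + 12β√(1-β²)`
and `6(1-β²) - 12β√(1-β²)`; it is positive definite iff `0 ≤ β < 1/√5`. -/
theorem hessian_at_lamellae (β a₀ : ℝ) (hβ0 : 0 ≤ β) (hβ1 : β < 1)
    (ha₀ : a₀ = Real.sqrt (2 * (1 - β ^ 2))) :
    (hessV β a₀ 0 0).HasEigenvalueR (12 * (1 - β ^ 2)) ∧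
    (hessV β a₀ 0 0).HasEigenvalueR
      (6 * (1 - β ^ 2) + 12 * β * Real.sqrt (1 - β ^ 2)) ∧
    (hessV β a₀ 0 0).HasEigenvalueR
      (6 * (1 - β ^ 2) - 12 * β * Real.sqrt (1 - β ^ 2)) ∧
    ((hessV β a₀ 0 0).PosDef ↔ β < 1 / Real.sqrt 5) := by
  set r := Real.sqrt (1 - β ^ 2) with hr
  have hq : 0 < 1 - β ^ 2 := by nlinarith
  have hr2 : r ^ 2 = 1 - β ^ 2 := Real.sq_sqrt hq.le
  have hrpos : 0 < r := Real.sqrt_pos.mpr hq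
  have ha2 : a₀ ^ 2 = 2 * (1 - β ^ 2) := by
    rw [ha₀]; exact Real.sq_sqrt (by nlinarith)
  have hsa : 6 * Real.sqrt 2 * β * a₀ = 12 * β * r := by
    have h1 : Real.sqrt 2 * a₀ = 2 * r := by
      rw [ha₀, ← Real.sqrt_mul (by norm_num : (0:ℝ) ≤ 2),
        show (2:ℝ) * (2 * (1 - β ^ 2)) = 2 ^ 2 * (1 - β ^ 2) by ring,
        Real.sqrt_mul (by positivity), Real.sqrt_sq (by norm_num : (0:ℝ) ≤ 2)]
    calc 6 * Real.sqrt 2 * β * a₀ = 6 * β * (Real.sqrt 2 * a₀) := by ring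
      _ = 12 * β * r := by rw [h1]; ring
  have key : hessV β a₀ 0 0
      = !![12*(1-β^2), 0, 0; 0, 6*(1-β^2), 12*β*r; 0, 12*β*r, 6*(1-β^2)] := by
    rw [hessV_eq]
    ext i j
    fin_cases i <;> fin_cases j <;>
      simp <;> nlinarith [ha2, hsa]
  refine ⟨⟨![1,0,0], ?_, ?_⟩, ⟨![0,1,1], ?_, ?_⟩, ⟨![0,1,-1], ?_, ?_⟩, ?_⟩
  · intro h; have := congrFun h 0; simp at this
  · funext i
    fin_cases i <;>
      simp [key, Matrix.mulVec, dotProduct, Fin.sum_univ_three,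
        Matrix.vecHead, Matrix.vecTail]
  · intro h; have := congrFun h 1; simp at this
  · funext i
    fin_cases i <;>
      simp [key, Matrix.mulVec, dotProduct, Fin.sum_univ_three,
        Matrix.vecHead, Matrix.vecTail] <;> ring
  · intro h; have := congrFun h 1; simp at this
  · funext i
    fin_cases i <;>
      simp [key, Matrix.mulVec, dotProduct, Fin.sum_univ_three,
        Matrix.vecHead, Matrix.vecTail] <;> ring
  · have hv5 : (1:ℝ) / Real.sqrt 5 = Real.sqrt (1/5) := by
      rw [one_div, ← Real.sqrt_inv, one_div]
    constructor
    · intro h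
      have h3 := h.dotProduct_mulVec_pos (x := ![0,1,-1]) (by intro hc; have := congrFun hc 1; simp at this)
      rw [key] at h3
      simp [Matrix.mulVec, dotProduct, Fin.sum_univ_three,
        Matrix.vecHead, Matrix.vecTail] at h3
      -- h3 : 0 < something equal to 2*(6*(1-β^2) - 12*β*r)
      have hlt : 12 * β * r < 6 * (1 - β ^ 2) := by nlinarith [h3]
      have h2βr : 2 * β < r := by nlinarith [hrpos, hr2]
      rw [hv5]
      rw [Real.lt_sqrt hβ0]
      nlinarith [hr2, h2βr]
    · intro h
      have hβ2 : β ^ 2 < 1/5 := by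
        rw [hv5] at h; exact (Real.lt_sqrt hβ0).mp h
      have h2βr : 2 * β < r := by
        rw [hr]
        refine (Real.lt_sqrt (by positivity)).mpr ?_
        nlinarith
      have hlt : 12 * β * r < 6 * (1 - β ^ 2) := by nlinarith [hrpos, hr2]
      have hs0 : 0 ≤ 12 * β * r := by positivity
      rw [Matrix.posDef_iff_dotProduct_mulVec]
      constructor
      · rw [Matrix.IsHermitian, key]
        ext i j
        fin_cases i <;> fin_cases j <;>
          simp [Matrix.vecHead, Matrix.vecTail]
      · intro x hx
        have hdot : dotProduct x ((hessV β a₀ 0 0).mulVec x)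
            = 12*(1-β^2)*(x 0)^2 + 6*(1-β^2)*(x 1)^2 + 6*(1-β^2)*(x 2)^2
              + 2*(12*β*r)*(x 1)*(x 2) := by
          rw [key]
          simp [Matrix.mulVec, dotProduct, Fin.sum_univ_three,
            Matrix.vecHead, Matrix.vecTail]
          ring
        have h6qs : 0 < 6*(1-β^2) - 12*β*r := by linarith
        have hpos : 0 < dotProduct x ((hessV β a₀ 0 0).mulVec x) := by
          rw [hdot]
          have expand : 12*(1-β^2)*(x 0)^2 + 6*(1-β^2)*(x 1)^2 + 6*(1-β^2)*(x 2)^2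
              + 2*(12*β*r)*(x 1)*(x 2)
              = 12*(1-β^2)*(x 0)^2 + (12*β*r)*(x 1 + x 2)^2
                + (6*(1-β^2) - 12*β*r)*((x 1)^2 + (x 2)^2) := by ring
          rw [expand]
          obtain ⟨i, hi⟩ := Function.ne_iff.mp hx
          simp only [Pi.zero_apply] at hi
          have hi2 := pow_two_pos_of_ne_zero hi
          have t1 : 0 ≤ 12*(1-β^2)*(x 0)^2 := by positivity
          have t2 : 0 ≤ (12*β*r)*(x 1 + x 2)^2 := mul_nonneg hs0 (sq_nonneg _)
          have t3 : 0 ≤ (6*(1-β^2) - 12*β*r)*((x 1)^2 + (x 2)^2) :=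
            mul_nonneg h6qs.le (by positivity)
          fin_cases i
          · have : 0 < 12*(1-β^2)*(x 0)^2 :=
              mul_pos (by linarith) hi2
            linarith
          · have hi2' : 0 < (x 1)^2 := hi2
            have : 0 < (6*(1-β^2) - 12*β*r)*((x 1)^2 + (x 2)^2) :=
              mul_pos h6qs (by nlinarith [sq_nonneg (x 2)])
            linarith
          · have hi2' : 0 < (x 2)^2 := hi2
            have : 0 < (6*(1-β^2) - 12*β*r)*((x 1)^2 + (x 2)^2) :=
              mul_pos h6qs (by nlinarith [sq_nonneg (x 1)])
            linarith
        have hst : star x = x := by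
          funext i; exact star_trivial _
        rw [hst]
        exact hpos
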